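/- Let ℙ_p denote polynomials of degree ≤ p on [−1,1] with values in a Hilbert space H. For continuous û : [−1,1] → H, there exists a unique Π̂^p û ∈ ℙ_p satisfying Π̂^p û(1) = û(1) and ∫_{−1}^1 ⟨û − Π̂^p û, v⟩ dt = 0 for all v ∈ ℙ_{p−1}. -/

import Mathlib

set_option linter.unusedSectionVars false

open MeasureTheory Set
open scoped RealInnerProductSpace

namespace HpProj

variable {H : Type*} [NormedAddCommGroup H] [InnerProductSpace ℝ H] [CompleteSpace H]

/-- H-valued polynomial from coefficients. -/
noncomputable def S (n : ℕ) (c : ℕ → H) : ℝ → H :=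
  fun t => ∑ i ∈ Finset.range n, t ^ i • c i

lemma contS (n : ℕ) (c : ℕ → H) : Continuous (S n c) :=
  continuous_finset_sum _ fun i _ => (continuous_pow i).smul continuous_const

/-- vanishing on Ioo extends to all of ℝ -/
lemma vanish_ext {n : ℕ} {c : ℕ → H}
    (h : ∀ t ∈ Ioo (-1:ℝ) 1, S n c t = 0) : ∀ t, S n c t = 0 := by
  intro t
  have key : ∀ w : H, ⟪S n c t, w⟫ = 0 := by
    intro w
    set P : Polynomial ℝ := ∑ i ∈ Finset.range n, Polynomial.C ⟪c i, w⟫ * Polynomial.X ^ i with hP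
    have heval : ∀ s : ℝ, P.eval s = ⟪S n c s, w⟫ := by
      intro s
      simp only [hP, Polynomial.eval_finset_sum, Polynomial.eval_mul, Polynomial.eval_C,
        Polynomial.eval_pow, Polynomial.eval_X, S, sum_inner, real_inner_smul_left]
      exact Finset.sum_congr rfl fun i _ => mul_comm _ _
    have hroot : {x : ℝ | P.IsRoot x}.Infinite := by
      refine Set.Infinite.mono (fun x hx => ?_) (Set.Ioo_infinite (show (-1:ℝ) < 1 by norm_num))
      simp only [mem_setOf_eq, Polynomial.IsRoot, heval, h x hx, inner_zero_left]
    have : P = 0 := Polynomial.eq_zero_of_infinite_isRoot P hroot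
    rw [← heval t, this, Polynomial.eval_zero]
  have := key (S n c t)
  rwa [inner_self_eq_zero] at this

/-- factorization: if the endpoint value is subtracted, (t-1) divides -/
lemma factor (p : ℕ) (c : ℕ → H) (t : ℝ) :
    S (p+1) c t - S (p+1) c 1
      = (t - 1) • S p (fun j => ∑ i ∈ Finset.range (p+1), if j < i then c i else 0) t := by
  have step1 : (t - 1) • S p (fun j => ∑ i ∈ Finset.range (p+1), if j < i then c i else 0) t
      = ∑ j ∈ Finset.range p, ∑ i ∈ Finset.range (p+1),
          (if j < i then t ^ (j+1) • c i - t ^ j • c i else 0) := by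
    rw [S, Finset.smul_sum]
    refine Finset.sum_congr rfl fun j _ => ?_
    rw [smul_comm, Finset.smul_sum, Finset.smul_sum]
    refine Finset.sum_congr rfl fun i _ => ?_
    by_cases h : j < i <;> simp [h, smul_smul, smul_sub, sub_mul, pow_succ, mul_comm, sub_smul]
  rw [step1, Finset.sum_comm]
  have step2 : ∀ i ∈ Finset.range (p+1),
      (∑ j ∈ Finset.range p, if j < i then t ^ (j+1) • c i - t ^ j • c i else 0)
        = t ^ i • c i - c i := by
    intro i hi
    rw [Finset.mem_range] at hi
    have hsub : Finset.range i ⊆ Finset.range p := Finset.range_subset_range.2 (by omega)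
    calc (∑ j ∈ Finset.range p, if j < i then t ^ (j+1) • c i - t ^ j • c i else 0)
        = ∑ j ∈ Finset.range i, (if j < i then t ^ (j+1) • c i - t ^ j • c i else 0) :=
          (Finset.sum_subset hsub (fun x hx hxn => if_neg (by
            rw [Finset.mem_range] at hx; by_contra hlt; exact hxn (Finset.mem_range.2 (by omega)))) ).symm
      _ = ∑ j ∈ Finset.range i, (t ^ (j+1) • c i - t ^ j • c i) :=
          Finset.sum_congr rfl fun j hj => if_pos (Finset.mem_range.1 hj)
      _ = t ^ i • c i - t ^ 0 • c i := Finset.sum_range_sub (fun j => t ^ j • c i) i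
      _ = t ^ i • c i - c i := by simp
  rw [Finset.sum_congr rfl step2, Finset.sum_sub_distrib, S, S]
  simp

/-- nonpositive continuous function with zero integral vanishes on Icc -/
lemma sign_vanish {f : ℝ → ℝ} (hf : ContinuousOn f (Icc (-1:ℝ) 1))
    (hle : ∀ t ∈ Icc (-1:ℝ) 1, f t ≤ 0)
    (hi : ∫ t in Icc (-1:ℝ) 1, f t = 0) : ∀ t ∈ Icc (-1:ℝ) 1, f t = 0 := by
  have hint : IntegrableOn f (Icc (-1:ℝ) 1) := hf.integrableOn_Icc
  have hnn : 0 ≤ᵐ[volume.restrict (Icc (-1:ℝ) 1)] (fun t => -f t) := by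
    rw [Filter.EventuallyLE, ae_restrict_iff' measurableSet_Icc]
    exact Filter.Eventually.of_forall fun t ht => by simpa using hle t ht
  have hzero : (fun t => -f t) =ᵐ[volume.restrict (Icc (-1:ℝ) 1)] 0 :=
    (integral_eq_zero_iff_of_nonneg_ae hnn hint.neg).1 (by rw [integral_neg, hi, neg_zero])
  have hae : f =ᵐ[volume.restrict (Icc (-1:ℝ) 1)] 0 := by
    filter_upwards [hzero] with t ht
    simpa using congrArg Neg.neg ht
  exact Measure.eqOn_Icc_of_ae_eq (volume) (by norm_num : (-1:ℝ) ≠ 1) hae hf continuousOn_const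

/-- core lemma: a degree ≤ p polynomial vanishing at 1 and orthogonal to ℙ_{p-1} is zero -/
lemma core {p : ℕ} {c : ℕ → H} (h1 : S (p+1) c 1 = 0)
    (horth : ∀ d : ℕ → H, ∫ t in Icc (-1:ℝ) 1, ⟪S (p+1) c t, S p d t⟫ = 0) :
    ∀ t, S (p+1) c t = 0 := by
  set d : ℕ → H := fun j => ∑ i ∈ Finset.range (p+1), if j < i then c i else 0 with hd
  have hfac : ∀ t, S (p+1) c t = (t - 1) • S p d t := fun t => by
    have := factor p c t; rwa [h1, sub_zero] at this
  have hf : ∀ t, ⟪S (p+1) c t, S p d t⟫ = (t - 1) * ‖S p d t‖^2 := fun t => by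
    rw [hfac t, real_inner_smul_left, real_inner_self_eq_norm_sq]
  have hcont : ContinuousOn (fun t => ⟪S (p+1) c t, S p d t⟫) (Icc (-1:ℝ) 1) :=
    (Continuous.inner (contS _ _) (contS _ _)).continuousOn
  have hle : ∀ t ∈ Icc (-1:ℝ) 1, ⟪S (p+1) c t, S p d t⟫ ≤ 0 := fun t ht => by
    rw [hf]
    exact mul_nonpos_iff.2 (Or.inr ⟨by linarith [ht.2], sq_nonneg _⟩)
  have hvan := sign_vanish hcont hle (horth d)
  apply vanish_ext
  intro t ht
  have h0 := hvan t (Ioo_subset_Icc_self ht)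
  rw [hf] at h0
  have hne : t - 1 ≠ 0 := by have := ht.2; intro hh; rw [sub_eq_zero] at hh; linarith
  have hs : ‖S p d t‖^2 = 0 := (mul_eq_zero.1 h0).resolve_left hne
  have hsz : S p d t = 0 := by
    rwa [sq_eq_zero_iff, norm_eq_zero] at hs
  rw [hfac t, hsz, smul_zero]

/-- the moment matrix -/
noncomputable def Mmat (p : ℕ) : Matrix (Fin (p+1)) (Fin (p+1)) ℝ :=
  Matrix.of fun j i => if (j:ℕ) < p then ∫ t in Icc (-1:ℝ) 1, t ^ ((j:ℕ) + (i:ℕ)) else 1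

lemma det_ne (p : ℕ) : (Mmat p).det ≠ 0 := by
  intro hdet
  obtain ⟨x, hx0, hx⟩ := Matrix.exists_mulVec_eq_zero_iff.2 hdet
  set y : ℕ → ℝ := fun n => if h : n < p+1 then x ⟨n,h⟩ else 0 with hy
  have hrow : ∀ j : Fin (p+1), ∑ i, Mmat p j i * x i = 0 := by
    intro j
    have := congrFun hx j
    simpa [Matrix.mulVec, dotProduct] using this
  -- endpoint condition
  have h1 : S (p+1) y 1 = 0 := by
    have hr := hrow ⟨p, by omega⟩
    simp only [Mmat, Matrix.of_apply, lt_self_iff_false, if_false, one_mul] at hr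
    have : S (p+1) y 1 = ∑ i : Fin (p+1), x i := by
      show (∑ i ∈ Finset.range (p+1), (1:ℝ) ^ i • y i) = _
      rw [← Fin.sum_univ_eq_sum_range (fun i => (1:ℝ) ^ i • y i) (p+1)]
      refine Finset.sum_congr rfl fun i _ => ?_
      simp [hy, i.isLt, Nat.not_lt.2 i.is_le]
    rw [this, hr]
  -- moment conditions
  have hmom : ∀ j, j < p → (∫ t in Icc (-1:ℝ) 1, t ^ j * S (p+1) y t) = 0 := by
    intro j hj
    have hr := hrow ⟨j, by omega⟩
    simp only [Mmat, Matrix.of_apply, hj, if_pos] at hr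
    have hexp : (fun t : ℝ => t ^ j * S (p+1) y t)
        = fun t => ∑ i ∈ Finset.range (p+1), t ^ (j + i) * y i := by
      funext t
      rw [S, Finset.mul_sum]
      exact Finset.sum_congr rfl fun i _ => by rw [smul_eq_mul, pow_add]; ring
    rw [hexp, integral_finset_sum _ (fun i _ =>
      ((show Continuous (fun t : ℝ => t ^ (j+i) * y i) from
        (continuous_pow (j+i)).mul continuous_const).continuousOn).integrableOn_Icc)]
    have : ∀ i ∈ Finset.range (p+1), (∫ t in Icc (-1:ℝ) 1, t ^ (j+i) * y i)
        = (∫ t in Icc (-1:ℝ) 1, t ^ (j+i)) * y i := fun i _ => integral_mul_const _ _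
    rw [Finset.sum_congr rfl this]
    rw [← Fin.sum_univ_eq_sum_range (fun i => (∫ t in Icc (-1:ℝ) 1, t ^ (j+i)) * y i) (p+1)]
    rw [← hr]
    refine Finset.sum_congr rfl fun i _ => ?_
    simp [hy, i.isLt, Nat.not_lt.2 i.is_le]
  -- orthogonality in inner-product form
  have horth : ∀ d : ℕ → ℝ, ∫ t in Icc (-1:ℝ) 1, ⟪S (p+1) y t, S p d t⟫ = 0 := by
    intro d
    have hexp : (fun t : ℝ => (⟪S (p+1) y t, S p d t⟫ : ℝ))
        = fun t => ∑ i ∈ Finset.range p, (t ^ i * S (p+1) y t) * d i := by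
      funext t
      have hSd : S p d t = ∑ i ∈ Finset.range p, t ^ i • d i := rfl
      rw [hSd, inner_sum]
      refine Finset.sum_congr rfl fun i _ => ?_
      rw [real_inner_smul_right]
      have : (⟪S (p+1) y t, d i⟫ : ℝ) = S (p+1) y t * d i := by
        simp [real_inner_comm, RCLike.inner_apply]; ring
      rw [this]; ring
    rw [hexp, integral_finset_sum _ (fun i _ =>
      ((show Continuous (fun t : ℝ => t ^ i * S (p+1) y t * d i) from
        ((continuous_pow i).mul (contS _ _)).mul continuous_const).continuousOn).integrableOn_Icc)]
    refine Finset.sum_eq_zero fun i hi => ?_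
    rw [integral_mul_const, hmom i (Finset.mem_range.1 hi), zero_mul]
  have hzero := core h1 horth
  -- extract coefficients
  apply hx0
  have hyz : ∀ k, k < p + 1 → y k = 0 := by
    intro k hk
    set P : Polynomial ℝ := ∑ i ∈ Finset.range (p+1), Polynomial.C (y i) * Polynomial.X ^ i with hP
    have heval : ∀ s : ℝ, P.eval s = S (p+1) y s := by
      intro s
      simp only [hP, Polynomial.eval_finset_sum, Polynomial.eval_mul, Polynomial.eval_C,
        Polynomial.eval_pow, Polynomial.eval_X, S, smul_eq_mul]
      exact Finset.sum_congr rfl fun i _ => mul_comm _ _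
    have hP0 : P = 0 := Polynomial.funext fun r => by rw [heval, hzero r, Polynomial.eval_zero]
    have hcoeff := congrArg (fun q => Polynomial.coeff q k) hP0
    simp only [hP, Polynomial.finset_sum_coeff, Polynomial.coeff_C_mul, Polynomial.coeff_X_pow,
      Polynomial.coeff_zero, mul_ite, mul_one, mul_zero] at hcoeff
    rwa [Finset.sum_ite_eq (Finset.range (p+1)) k y, if_pos (Finset.mem_range.2 hk)] at hcoeff
  funext i
  have := hyz i i.isLt
  simpa [hy, i.isLt, i.is_le] using this

/-- existence of the coefficient vector -/
lemma exists_coeffs (p : ℕ) (u : ℝ → H) (hu : ContinuousOn u (Icc (-1:ℝ) 1)) :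
    ∃ c : ℕ → H, S (p+1) c 1 = u 1 ∧
      ∀ j, j < p → (∫ t in Icc (-1:ℝ) 1, t ^ j • (u t - S (p+1) c t)) = 0 := by
  have hMM : Mmat p * (Mmat p)⁻¹ = 1 := Matrix.mul_nonsing_inv _ (isUnit_iff_ne_zero.2 (det_ne p))
  set b : Fin (p+1) → H := fun j =>
    if (j:ℕ) < p then ∫ t in Icc (-1:ℝ) 1, (t ^ (j:ℕ)) • u t else u 1 with hb
  set c' : Fin (p+1) → H := fun i => ∑ j, ((Mmat p)⁻¹ i j) • b j with hc'
  have key : ∀ j, ∑ i, (Mmat p) j i • c' i = b j := by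
    intro j
    calc ∑ i, Mmat p j i • c' i
        = ∑ i, ∑ k, (Mmat p j i * (Mmat p)⁻¹ i k) • b k := by
          refine Finset.sum_congr rfl fun i _ => ?_
          rw [hc', Finset.smul_sum]
          exact Finset.sum_congr rfl fun k _ => (smul_smul _ _ _)
      _ = ∑ k, (∑ i, Mmat p j i * (Mmat p)⁻¹ i k) • b k := by
          rw [Finset.sum_comm]
          exact Finset.sum_congr rfl fun k _ => (Finset.sum_smul).symm
      _ = ∑ k, ((Mmat p * (Mmat p)⁻¹) j k) • b k := by simp [Matrix.mul_apply]
      _ = b j := by rw [hMM]; simp [Matrix.one_apply]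
  set c : ℕ → H := fun n => if h : n < p+1 then c' ⟨n,h⟩ else 0 with hc
  refine ⟨c, ?_, ?_⟩
  · -- endpoint
    have hr := key ⟨p, by omega⟩
    simp only [Mmat, Matrix.of_apply, lt_self_iff_false, if_false, one_smul] at hr
    have hbp : b ⟨p, by omega⟩ = u 1 := by simp [hb]
    rw [hbp] at hr
    have : S (p+1) c 1 = ∑ i : Fin (p+1), c' i := by
      show (∑ i ∈ Finset.range (p+1), (1:ℝ) ^ i • c i) = _
      rw [← Fin.sum_univ_eq_sum_range (fun i => (1:ℝ) ^ i • c i) (p+1)]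
      refine Finset.sum_congr rfl fun i _ => ?_
      simp [hc, i.isLt, Nat.not_lt.2 i.is_le]
    rw [this, hr]
  · -- moments
    intro j hj
    have hr := key ⟨j, by omega⟩
    simp only [Mmat, Matrix.of_apply, hj, if_pos] at hr
    have hbj : b ⟨j, by omega⟩ = ∫ t in Icc (-1:ℝ) 1, (t ^ j) • u t := by simp [hb, hj]
    rw [hbj] at hr
    have hSint : (∫ t in Icc (-1:ℝ) 1, t ^ j • S (p+1) c t)
        = ∑ i ∈ Finset.range (p+1), (∫ t in Icc (-1:ℝ) 1, t ^ (j+i)) • c i := by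
      have hexp : (fun t : ℝ => t ^ j • S (p+1) c t)
          = fun t => ∑ i ∈ Finset.range (p+1), t ^ (j+i) • c i := by
        funext t
        rw [S, Finset.smul_sum]
        exact Finset.sum_congr rfl fun i _ => by rw [smul_smul, pow_add]
      rw [hexp, integral_finset_sum _ (fun i _ =>
        ((show Continuous (fun t : ℝ => t ^ (j+i) • c i) from
          (continuous_pow (j+i)).smul continuous_const).continuousOn).integrableOn_Icc)]
      exact Finset.sum_congr rfl fun i _ => integral_smul_const _ _
    have hconv : ∑ i ∈ Finset.range (p+1), (∫ t in Icc (-1:ℝ) 1, t ^ (j+i)) • c i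
        = ∑ i : Fin (p+1), (∫ t in Icc (-1:ℝ) 1, t ^ (j+(i:ℕ))) • c' i := by
      rw [← Fin.sum_univ_eq_sum_range (fun i => (∫ t in Icc (-1:ℝ) 1, t ^ (j+i)) • c i) (p+1)]
      refine Finset.sum_congr rfl fun i _ => ?_
      simp [hc, i.isLt, Nat.not_lt.2 i.is_le]
    have hsplit : (∫ t in Icc (-1:ℝ) 1, t ^ j • (u t - S (p+1) c t))
        = (∫ t in Icc (-1:ℝ) 1, t ^ j • u t) - ∫ t in Icc (-1:ℝ) 1, t ^ j • S (p+1) c t := by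
      rw [← integral_sub (show IntegrableOn (fun t : ℝ => t ^ j • u t) (Icc (-1:ℝ) 1) volume from
          ((continuous_pow j).continuousOn.smul hu).integrableOn_Icc)
        (show IntegrableOn (fun t : ℝ => t ^ j • S (p+1) c t) (Icc (-1:ℝ) 1) volume from
          ((continuous_pow j).smul (contS _ _)).continuousOn.integrableOn_Icc)]
      exact integral_congr_ae (Filter.Eventually.of_forall fun t => smul_sub _ _ _)
    rw [hsplit, hSint, hconv, ← hr, sub_eq_zero]

end HpProj

open HpProj

/-- Well-definedness of the hp-DG time projection: for a continuous Hilbert-space-valued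
function `û : [−1,1] → H` there is a unique polynomial `Π̂^p û` of degree ≤ p with
`Π̂^p û(1) = û(1)` and `∫_{−1}^1 ⟨û − Π̂^p û, v⟩ dt = 0` for all polynomials `v` of degree
≤ p − 1. -/
theorem hp_projection_well_defined (H : Type*) [NormedAddCommGroup H]
    [InnerProductSpace ℝ H] [CompleteSpace H] (p : ℕ) (u : ℝ → H)
    (hu : ContinuousOn u (Icc (-1 : ℝ) 1)) :
    ∃! Pu : ℝ → H,
      (∃ c : ℕ → H, Pu = fun t => ∑ i ∈ Finset.range (p + 1), t ^ i • c i) ∧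
      Pu 1 = u 1 ∧
      ∀ v : ℝ → H, (∃ c : ℕ → H, v = fun t => ∑ i ∈ Finset.range p, t ^ i • c i) →
        ∫ t in Icc (-1 : ℝ) 1, ⟪u t - Pu t, v t⟫ = 0 := by
  obtain ⟨c, hend, hmom⟩ := exists_coeffs p u hu
  have hwint : ∀ i : ℕ, Integrable (fun t => t ^ i • (u t - S (p+1) c t))
      (volume.restrict (Icc (-1:ℝ) 1)) := fun i =>
    ((continuous_pow i).continuousOn.smul (hu.sub (contS _ _).continuousOn)).integrableOn_Icc
  -- orthogonality of the constructed projection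
  have horthc : ∀ d : ℕ → H,
      ∫ t in Icc (-1:ℝ) 1, ⟪u t - S (p+1) c t, S p d t⟫ = 0 := by
    intro d
    have hexp : (fun t : ℝ => (⟪u t - S (p+1) c t, S p d t⟫ : ℝ))
        = fun t => ∑ i ∈ Finset.range p, ⟪d i, t ^ i • (u t - S (p+1) c t)⟫ := by
      funext t
      have hSd : S p d t = ∑ i ∈ Finset.range p, t ^ i • d i := rfl
      rw [hSd, inner_sum]
      refine Finset.sum_congr rfl fun i _ => ?_
      rw [real_inner_smul_right, real_inner_comm]
      exact (real_inner_smul_right _ _ _).symm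
    rw [hexp, integral_finset_sum _ (fun i _ =>
      (continuousOn_const.inner ((continuous_pow i).continuousOn.smul
        (hu.sub (contS _ _).continuousOn))).integrableOn_Icc)]
    refine Finset.sum_eq_zero fun i hi => ?_
    rw [integral_inner (hwint i) (d i), hmom i (Finset.mem_range.1 hi), inner_zero_right]
  refine ⟨S (p+1) c, ⟨⟨c, rfl⟩, hend, ?_⟩, ?_⟩
  · rintro v ⟨d, rfl⟩
    exact horthc d
  · rintro Pu' ⟨⟨c', rfl⟩, hend', horth'⟩
    have hSc' : (fun t => ∑ i ∈ Finset.range (p+1), t ^ i • c' i) = S (p+1) c' := rfl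
    rw [hSc'] at hend' horth' ⊢
    set e : ℕ → H := fun i => c' i - c i with he
    have hSe : ∀ t, S (p+1) e t = S (p+1) c' t - S (p+1) c t := by
      intro t; simp [S, he, smul_sub, Finset.sum_sub_distrib]
    have h1 : S (p+1) e 1 = 0 := by rw [hSe, hend', hend, sub_self]
    have horthe : ∀ d : ℕ → H, ∫ t in Icc (-1:ℝ) 1, ⟪S (p+1) e t, S p d t⟫ = 0 := by
      intro d
      have hint1 : Integrable (fun t => (⟪u t - S (p+1) c t, S p d t⟫ : ℝ))
          (volume.restrict (Icc (-1:ℝ) 1)) :=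
        ((hu.sub (contS _ _).continuousOn).inner (contS _ _).continuousOn).integrableOn_Icc
      have hint2 : Integrable (fun t => (⟪u t - S (p+1) c' t, S p d t⟫ : ℝ))
          (volume.restrict (Icc (-1:ℝ) 1)) :=
        ((hu.sub (contS _ _).continuousOn).inner (contS _ _).continuousOn).integrableOn_Icc
      have hx : (fun t => (⟪S (p+1) e t, S p d t⟫ : ℝ))
          = fun t => ⟪u t - S (p+1) c t, S p d t⟫ - ⟪u t - S (p+1) c' t, S p d t⟫ := by
        funext t
        rw [hSe, ← inner_sub_left]
        congr 1
        abel
      rw [hx, integral_sub hint1 hint2, horthc d, horth' (S p d) ⟨d, rfl⟩, sub_zero]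
    have hz := core h1 horthe
    funext t
    have h := hz t
    rw [hSe] at h
    exact sub_eq_zero.1 h
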